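/- Let n ≥ 3 and 1 ≤ l ≤ n−2. Set X := {2^n − 2^j : 0 ≤ j ≤ n}, m := (2^(n+1)−1) + (2^n − 2^l), Y := m − X, and A := X ∪ Y ∪ {2^n}. Then A is a normalised MSTD set with |A+A| = |A−A| + 1. -/
import Mathlib


open Finset Pointwise

/-- A finite set of integers is normalised if its smallest element is `0` and
the gcd of its elements is `1`. -/
def IsNormalised (A : Finset ℤ) : Prop :=
  0 ∈ A ∧ (∀ a ∈ A, 0 ≤ a) ∧ A.gcd id = 1

lemma dblN (k : ℕ) (hk : 1 ≤ k) : (2:ℕ)^k = 2*2^(k-1) := by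
  rw [← pow_succ']; congr 1; omega

lemma dblZ (k : ℕ) (hk : 1 ≤ k) : (2:ℤ)^k = 2*2^(k-1) := by
  rw [← pow_succ']; congr 1; omega

lemma keyN (n l i j : ℕ) (hn : 3 ≤ n) (hl1 : 1 ≤ l) (hl2 : l + 2 ≤ n) :
    2 ^ n + 2 ^ j ≠ 2 ^ i + 2 ^ l + 1 := by
  intro h
  have dn := dblN n (by omega)
  have dl := dblN l hl1
  rcases Nat.eq_zero_or_pos i with hi0 | hi1
  · subst hi0
    rcases Nat.eq_zero_or_pos j with hj0 | hj1
    · subst hj0; simp only [pow_zero] at h; omega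
    · have dj := dblN j hj1
      have h2 : 2 ^ (n-1) + 2 ^ (j-1) = 2 ^ (l-1) + 1 := by
        simp only [pow_zero] at h; omega
      rcases Nat.lt_or_ge l 2 with hl | hl
      · have h4 : (4:ℕ) ≤ 2 ^ (n-1) := by
          calc (4:ℕ) = 2^2 := by norm_num
          _ ≤ 2^(n-1) := Nat.pow_le_pow_right (by norm_num) (by omega)
        have hl1' : l - 1 = 0 := by omega
        rw [hl1'] at h2; simp only [pow_zero] at h2
        have hj' : 1 ≤ 2^(j-1) := Nat.one_le_two_pow
        omega
      · have dn2 := dblN (n-1) (by omega)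
        have dl2 := dblN (l-1) (by omega)
        rcases Nat.lt_or_ge j 2 with hj | hj
        · have hj1' : j - 1 = 0 := by omega
          rw [hj1'] at h2; simp only [pow_zero] at h2
          have heq : (2:ℕ)^(n-1) = 2^(l-1) := by omega
          have := Nat.pow_right_injective (le_refl 2) heq
          omega
        · have dj2 := dblN (j-1) (by omega)
          omega
  · have di := dblN i hi1
    rcases Nat.eq_zero_or_pos j with hj0 | hj1
    · subst hj0; simp only [pow_zero] at h
      have h2 : 2^n = 2^i + 2^l := by omega
      rcases lt_trichotomy i l with hil | hil | hil
      · have e1 : (2:ℕ)^n = 2^i * 2^(n-i) := by rw [← pow_add]; congr 1; omega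
        have e2 : (2:ℕ)^l = 2^i * 2^(l-i) := by rw [← pow_add]; congr 1; omega
        have e3 : (2:ℕ)^(n-i) = 1 + 2^(l-i) :=
          Nat.eq_of_mul_eq_mul_left (Nat.two_pow_pos i) (by rw [← e1, h2, e2]; ring)
        have d1 := dblN (n-i) (by omega)
        have d2 := dblN (l-i) (by omega)
        omega
      · subst hil
        have heq : (2:ℕ)^n = 2^(i+1) := by rw [pow_succ]; omega
        have := Nat.pow_right_injective (le_refl 2) heq
        omega
      · have e1 : (2:ℕ)^n = 2^l * 2^(n-l) := by rw [← pow_add]; congr 1; omega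
        have e2 : (2:ℕ)^i = 2^l * 2^(i-l) := by rw [← pow_add]; congr 1; omega
        have e3 : (2:ℕ)^(n-l) = 2^(i-l) + 1 :=
          Nat.eq_of_mul_eq_mul_left (Nat.two_pow_pos l) (by rw [← e1, h2, e2]; ring)
        have d1 := dblN (n-l) (by omega)
        have d2 := dblN (i-l) (by omega)
        omega
    · have dj := dblN j hj1
      omega

/-- Theorem 3: for `n ≥ 3` and `1 ≤ l ≤ n−2`, the set
`A = X ∪ (m − X) ∪ {2^n}` is a normalised MSTD set with `|A+A| = |A−A| + 1`. -/
theorem thm3 (n l : ℕ) (hn : 3 ≤ n) (hl1 : 1 ≤ l) (hl2 : l + 2 ≤ n)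
    (X Y A : Finset ℤ) (m : ℤ)
    (hX : X = (Finset.Icc 0 n).image (fun j => (2 : ℤ) ^ n - 2 ^ j))
    (hm : m = (2 ^ (n + 1) - 1) + (2 ^ n - 2 ^ l))
    (hY : Y = X.image (fun x => m - x))
    (hA : A = X ∪ Y ∪ {2 ^ n}) :
    IsNormalised A ∧ (A + A).card = (A - A).card + 1 := by
  have pow_mono : ∀ {a b : ℕ}, a ≤ b → (2:ℤ)^a ≤ 2^b :=
    fun h => pow_le_pow_right₀ (by norm_num) h
  have powpos : ∀ k : ℕ, (0:ℤ) < 2^k := fun k => by positivity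
  have memX : ∀ a : ℤ, a ∈ X ↔ ∃ j, j ≤ n ∧ a = 2^n - 2^j := by
    intro a
    rw [hX]; simp only [Finset.mem_image, Finset.mem_Icc]
    constructor
    · rintro ⟨j, ⟨_, hj⟩, he⟩; exact ⟨j, hj, he.symm⟩
    · rintro ⟨j, hj, he⟩; exact ⟨j, ⟨Nat.zero_le _, hj⟩, he.symm⟩
  have memY : ∀ a : ℤ, a ∈ Y ↔ ∃ j, j ≤ n ∧ a = m - (2^n - 2^j) := by
    intro a; rw [hY]; simp only [Finset.mem_image]
    constructor
    · rintro ⟨x, hx, he⟩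
      obtain ⟨j, hj, hxe⟩ := (memX x).1 hx
      exact ⟨j, hj, by rw [← he, hxe]⟩
    · rintro ⟨j, hj, he⟩
      exact ⟨2^n - 2^j, (memX _).2 ⟨j, hj, rfl⟩, he.symm⟩
  set S : Finset ℤ := X ∪ Y with hSdef
  have hA' : A = S ∪ {2^n} := hA
  have memS : ∀ a : ℤ, a ∈ S ↔ a ∈ X ∨ a ∈ Y := fun a => Finset.mem_union
  have h0X : (0:ℤ) ∈ X := (memX 0).2 ⟨n, le_refl n, by ring⟩
  have h0S : (0:ℤ) ∈ S := (memS 0).2 (Or.inl h0X)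
  have F1 : ∀ a ∈ S, m - a ∈ S := by
    intro a ha
    rcases (memS a).1 ha with hx | hy
    · obtain ⟨j, hj, rfl⟩ := (memX a).1 hx
      exact (memS _).2 (Or.inr ((memY _).2 ⟨j, hj, rfl⟩))
    · obtain ⟨j, hj, rfl⟩ := (memY a).1 hy
      refine (memS _).2 (Or.inl ?_)
      have he : m - (m - (2^n - 2^j)) = 2^n - 2^j := by ring
      rw [he]; exact (memX _).2 ⟨j, hj, rfl⟩
  have F2 : ∀ a ∈ S, ∃ b ∈ S, ∃ d ∈ S, a - 2^n = b - d := by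
    intro a ha
    rcases (memS a).1 ha with hx | hy
    · obtain ⟨j, hj, rfl⟩ := (memX a).1 hx
      rcases Nat.lt_or_ge j n with hjn | hjn
      · refine ⟨2^n - 2^(j+1), (memS _).2 (Or.inl ((memX _).2 ⟨j+1, by omega, rfl⟩)),
          2^n - 2^j, (memS _).2 (Or.inl ((memX _).2 ⟨j, hj, rfl⟩)), ?_⟩
        rw [pow_succ]; ring
      · have hj' : j = n := le_antisymm hj hjn
        refine ⟨2^n - 2^0, (memS _).2 (Or.inl ((memX _).2 ⟨0, by omega, rfl⟩)),
          m - (2^n - 2^l), (memS _).2 (Or.inr ((memY _).2 ⟨l, by omega, rfl⟩)), ?_⟩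
        rw [hj', hm, pow_succ]; ring
    · obtain ⟨j, hj, rfl⟩ := (memY a).1 hy
      rcases Nat.eq_zero_or_pos j with hj0 | hj1
      · subst hj0
        refine ⟨2^n - 2^l, (memS _).2 (Or.inl ((memX _).2 ⟨l, by omega, rfl⟩)),
          0, h0S, ?_⟩
        rw [hm, pow_succ]; ring
      · have dj := dblZ j hj1
        refine ⟨m - (2^n - 2^(j-1)), (memS _).2 (Or.inr ((memY _).2 ⟨j-1, by omega, rfl⟩)),
          2^n - 2^(j-1), (memS _).2 (Or.inl ((memX _).2 ⟨j-1, by omega, rfl⟩)), ?_⟩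
        rw [dj]; ring
  have dn1 : (2:ℤ)^(n+1) = 2*2^n := by rw [pow_succ]; ring
  have F3 : ∀ a ∈ S, ∀ b ∈ S, a + b ≠ 2^(n+1) := by
    have hXY : ∀ i j : ℕ, i ≤ n → j ≤ n →
        (2^n - 2^i) + (m - (2^n - 2^j)) ≠ (2:ℤ)^(n+1) := by
      intro i j hi hj h
      rw [hm] at h
      have hz : (2:ℤ)^n + 2^j = 2^i + 2^l + 1 := by linarith [dn1]
      have hzn : (2:ℕ)^n + 2^j = 2^i + 2^l + 1 := by exact_mod_cast hz
      exact keyN n l i j hn hl1 hl2 hzn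
    intro a ha b hb h
    rcases (memS a).1 ha with hax | hay <;> rcases (memS b).1 hb with hbx | hby
    · obtain ⟨i, hi, rfl⟩ := (memX a).1 hax
      obtain ⟨j, hj, rfl⟩ := (memX b).1 hbx
      have := powpos i; have := powpos j
      linarith [dn1]
    · obtain ⟨i, hi, rfl⟩ := (memX a).1 hax
      obtain ⟨j, hj, rfl⟩ := (memY b).1 hby
      exact hXY i j hi hj h
    · obtain ⟨i, hi, rfl⟩ := (memY a).1 hay
      obtain ⟨j, hj, rfl⟩ := (memX b).1 hbx
      exact hXY j i hj hi (by linarith)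
    · obtain ⟨i, hi, rfl⟩ := (memY a).1 hay
      obtain ⟨j, hj, rfl⟩ := (memY b).1 hby
      have hL : (2:ℤ)^l * 4 ≤ 2^n := by
        calc (2:ℤ)^l * 4 = 2^(l+2) := by rw [pow_add]; norm_num
        _ ≤ 2^n := pow_mono (by omega)
      have := powpos i; have := powpos j; have := powpos n
      rw [hm] at h
      linarith [dn1]
  have F5 : ∀ a ∈ S, (2:ℤ)^n + a ∈ S + S := by
    intro a ha
    obtain ⟨b, hb, d, hd, he⟩ := F2 (m - a) (F1 a ha)
    exact Finset.mem_add.mpr ⟨m - b, F1 b hb, d, hd, by linarith⟩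
  have h2c : ((2:ℤ)^(n+1)) ∉ S + S := by
    intro hmem
    obtain ⟨x, hx, y, hy, hxy⟩ := Finset.mem_add.mp hmem
    exact F3 x hx y hy hxy
  have hsub : S ⊆ A := by rw [hA']; exact Finset.subset_union_left
  have hAA : A + A = insert ((2:ℤ)^(n+1)) (S + S) := by
    apply Finset.Subset.antisymm
    · intro x hx
      obtain ⟨u, hu, v, hv, rfl⟩ := Finset.mem_add.mp hx
      rw [hA'] at hu hv
      rcases Finset.mem_union.mp hu with hu | hu <;>
        rcases Finset.mem_union.mp hv with hv | hv
      · exact Finset.mem_insert_of_mem (Finset.mem_add.mpr ⟨u, hu, v, hv, rfl⟩)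
      · have hv' := Finset.mem_singleton.mp hv
        subst hv'
        refine Finset.mem_insert_of_mem ?_
        rw [add_comm u (2^n)]; exact F5 u hu
      · have hu' := Finset.mem_singleton.mp hu; subst hu'
        exact Finset.mem_insert_of_mem (F5 v hv)
      · have hu' := Finset.mem_singleton.mp hu
        have hv' := Finset.mem_singleton.mp hv
        subst hu'; subst hv'
        have he : (2:ℤ)^n + 2^n = 2^(n+1) := by rw [pow_succ]; ring
        rw [he]; exact Finset.mem_insert_self _ _
    · intro x hx
      rcases Finset.mem_insert.mp hx with rfl | hx
      · have h2n : (2:ℤ)^n ∈ A := by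
          rw [hA']; exact Finset.mem_union_right _ (Finset.mem_singleton_self _)
        exact Finset.mem_add.mpr ⟨_, h2n, _, h2n, by rw [pow_succ]; ring⟩
      · obtain ⟨u, hu, v, hv, rfl⟩ := Finset.mem_add.mp hx
        exact Finset.mem_add.mpr ⟨u, hsub hu, v, hsub hv, rfl⟩
  have hAD : A - A = S - S := by
    apply Finset.Subset.antisymm
    · intro x hx
      obtain ⟨u, hu, v, hv, rfl⟩ := Finset.mem_sub.mp hx
      rw [hA'] at hu hv
      rcases Finset.mem_union.mp hu with hu | hu <;>
        rcases Finset.mem_union.mp hv with hv | hv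
      · exact Finset.mem_sub.mpr ⟨u, hu, v, hv, rfl⟩
      · have hv' := Finset.mem_singleton.mp hv; subst hv'
        obtain ⟨b, hb, d, hd, he⟩ := F2 u hu
        exact Finset.mem_sub.mpr ⟨b, hb, d, hd, he.symm⟩
      · have hu' := Finset.mem_singleton.mp hu; subst hu'
        obtain ⟨b, hb, d, hd, he⟩ := F2 v hv
        exact Finset.mem_sub.mpr ⟨d, hd, b, hb, by linarith⟩
      · have hu' := Finset.mem_singleton.mp hu
        have hv' := Finset.mem_singleton.mp hv
        subst hu'; subst hv'
        exact Finset.mem_sub.mpr ⟨0, h0S, 0, h0S, by ring⟩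
    · intro x hx
      obtain ⟨u, hu, v, hv, rfl⟩ := Finset.mem_sub.mp hx
      exact Finset.mem_sub.mpr ⟨u, hsub hu, v, hsub hv, rfl⟩
  have himg : (S + S).image (fun x => x - m) = S - S := by
    apply Finset.Subset.antisymm
    · intro x hx
      obtain ⟨y, hy, rfl⟩ := Finset.mem_image.mp hx
      obtain ⟨u, hu, v, hv, rfl⟩ := Finset.mem_add.mp hy
      exact Finset.mem_sub.mpr ⟨u, hu, m - v, F1 v hv, by ring⟩
    · intro x hx
      obtain ⟨u, hu, v, hv, rfl⟩ := Finset.mem_sub.mp hx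
      exact Finset.mem_image.mpr
        ⟨u + (m - v), Finset.mem_add.mpr ⟨u, hu, m - v, F1 v hv, rfl⟩, by ring⟩
  have hcards : (S + S).card = (S - S).card := by
    rw [← himg]; exact (Finset.card_image_of_injective _ sub_left_injective).symm
  have hcardfinal : (A + A).card = (A - A).card + 1 := by
    rw [hAA, hAD, Finset.card_insert_of_notMem h2c, hcards]
  refine ⟨⟨?_, ?_, ?_⟩, hcardfinal⟩
  · rw [hA']; exact Finset.mem_union_left _ h0S
  · intro a ha
    rw [hA'] at ha
    rcases Finset.mem_union.mp ha with ha | ha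
    · rcases (memS a).1 ha with hx | hy
      · obtain ⟨j, hj, rfl⟩ := (memX a).1 hx
        have := pow_mono hj; linarith
      · obtain ⟨j, hj, rfl⟩ := (memY a).1 hy
        have h1 : (2:ℤ)^l ≤ 2^n := pow_mono (by omega)
        have := powpos j; have := powpos n
        rw [hm]; linarith [dn1]
    · rw [Finset.mem_singleton.mp ha]; positivity
  · have hd1 : A.gcd id ∣ 2^n :=
      Finset.gcd_dvd (by rw [hA']; exact Finset.mem_union_right _ (Finset.mem_singleton_self _))
    have hd2 : A.gcd id ∣ 2^n - 1 :=
      Finset.gcd_dvd (by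
        rw [hA']
        exact Finset.mem_union_left _ ((memS _).2 (Or.inl ((memX _).2 ⟨0, by omega, by norm_num⟩))))
    have hd : A.gcd id ∣ 1 := by
      have h12 := dvd_sub hd1 hd2
      have he : (2:ℤ)^n - (2^n - 1) = 1 := by ring
      rwa [he] at h12
    rw [← Finset.normalize_gcd]; exact normalize_eq_one.mpr (isUnit_of_dvd_one hd)
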